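/- For real numbers τ₁, τ₂, τ₃ with τ₁ + τ₂ + τ₃ = 0, and a real number a with |τ₃| ≤ C·⟨a⟩ for some constant C ≥ 1 (where ⟨x⟩ := (1+x²)^{1/2}), one has |τ₂| + |τ₃| ≲ ⟨τ₁⟩^{1/2}·⟨τ₂⟩^{1/2} + ⟨τ₁⟩^{1/2}·⟨a⟩^{1/2} + ⟨τ₂⟩^{1/2}·⟨a⟩^{1/2}, where the implicit constant depends only on C. -/
import Mathlib


noncomputable def jb (x : ℝ) : ℝ := Real.sqrt (1 + x ^ 2)

lemma jb_nonneg (x : ℝ) : 0 ≤ jb x := Real.sqrt_nonneg _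

lemma one_le_jb (x : ℝ) : 1 ≤ jb x := by
  rw [show (1:ℝ) = Real.sqrt 1 by simp]
  exact Real.sqrt_le_sqrt (by nlinarith [sq_nonneg x])

lemma abs_le_jb (x : ℝ) : |x| ≤ jb x := by
  rw [show |x| = Real.sqrt (x ^ 2) by rw [Real.sqrt_sq_eq_abs]]
  exact Real.sqrt_le_sqrt (by linarith)

lemma le_sqrt_mul_sqrt {w u v : ℝ} (hw : 0 ≤ w) (hu : 0 ≤ u) (h1 : w ≤ u) (h2 : w ≤ v) :
    w ≤ Real.sqrt u * Real.sqrt v := by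
  rw [← Real.sqrt_mul hu]
  calc w = Real.sqrt (w * w) := by rw [Real.sqrt_mul_self hw]
    _ ≤ Real.sqrt (u * v) := Real.sqrt_le_sqrt (by nlinarith)

lemma sqrt_add_le (u v : ℝ) (hu : 0 ≤ u) (hv : 0 ≤ v) :
    Real.sqrt (u + v) ≤ Real.sqrt u + Real.sqrt v := by
  rw [show Real.sqrt u + Real.sqrt v = Real.sqrt ((Real.sqrt u + Real.sqrt v) ^ 2) by
    rw [Real.sqrt_sq (by positivity)]]
  refine Real.sqrt_le_sqrt ?_
  have h1 := Real.sq_sqrt hu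
  have h2 := Real.sq_sqrt hv
  nlinarith [Real.sqrt_nonneg u, Real.sqrt_nonneg v]

/-- Weight redistribution inequality (Section 7 of Tao's paper). -/
theorem stmt_0 :
    ∀ C : ℝ, 1 ≤ C → ∃ K > 0, ∀ τ₁ τ₂ τ₃ a : ℝ,
      τ₁ + τ₂ + τ₃ = 0 → |τ₃| ≤ C * jb a →
      |τ₂| + |τ₃| ≤ K * (jb τ₁ ^ ((1:ℝ)/2) * jb τ₂ ^ ((1:ℝ)/2)
        + jb τ₁ ^ ((1:ℝ)/2) * jb a ^ ((1:ℝ)/2)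
        + jb τ₂ ^ ((1:ℝ)/2) * jb a ^ ((1:ℝ)/2)) := by
  intro C hC
  refine ⟨2 * C, by linarith, ?_⟩
  intro τ₁ τ₂ τ₃ a hsum h3
  rw [← Real.sqrt_eq_rpow, ← Real.sqrt_eq_rpow, ← Real.sqrt_eq_rpow]
  set s₁ := Real.sqrt (jb τ₁) with hs₁
  set s₂ := Real.sqrt (jb τ₂) with hs₂
  set sa := Real.sqrt (jb a) with hsa
  have hs₁n : 0 ≤ s₁ := Real.sqrt_nonneg _
  have hs₂n : 0 ≤ s₂ := Real.sqrt_nonneg _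
  have hsan : 0 ≤ sa := Real.sqrt_nonneg _
  have hsqC : Real.sqrt C ≤ C := by
    calc Real.sqrt C ≤ Real.sqrt (C ^ 2) := Real.sqrt_le_sqrt (by nlinarith)
      _ = C := Real.sqrt_sq (by linarith)
  have hsqCn : 0 ≤ Real.sqrt C := Real.sqrt_nonneg _
  -- bound |τ₂|
  have hb2 : |τ₂| ≤ s₂ * (s₁ + C * sa) := by
    have h2a : |τ₂| ≤ jb τ₁ + C * jb a := by
      have : |τ₂| ≤ |τ₁| + |τ₃| := by
        calc |τ₂| = |(-τ₁) + (-τ₃)| := by rw [show (-τ₁) + (-τ₃) = τ₂ by linarith]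
          _ ≤ |(-τ₁)| + |(-τ₃)| := abs_add_le _ _
          _ = |τ₁| + |τ₃| := by rw [abs_neg, abs_neg]
      linarith [abs_le_jb τ₁]
    have key : |τ₂| ≤ s₂ * Real.sqrt (jb τ₁ + C * jb a) :=
      le_sqrt_mul_sqrt (abs_nonneg _) (jb_nonneg _) (abs_le_jb _) h2a
    have hsplit : Real.sqrt (jb τ₁ + C * jb a) ≤ s₁ + C * sa := by
      calc Real.sqrt (jb τ₁ + C * jb a) ≤ s₁ + Real.sqrt (C * jb a) :=
            sqrt_add_le _ _ (jb_nonneg _) (mul_nonneg (by linarith) (jb_nonneg _))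
        _ = s₁ + Real.sqrt C * sa := by rw [Real.sqrt_mul (by linarith)]
        _ ≤ s₁ + C * sa := by nlinarith
    calc |τ₂| ≤ s₂ * Real.sqrt (jb τ₁ + C * jb a) := key
      _ ≤ s₂ * (s₁ + C * sa) := by nlinarith
  -- bound |τ₃|
  have hb3 : |τ₃| ≤ C * sa * (s₁ + s₂) := by
    have h3a : |τ₃| ≤ jb τ₁ + jb τ₂ := by
      have : |τ₃| ≤ |τ₁| + |τ₂| := by
        calc |τ₃| = |(-τ₁) + (-τ₂)| := by rw [show (-τ₁) + (-τ₂) = τ₃ by linarith]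
          _ ≤ |(-τ₁)| + |(-τ₂)| := abs_add_le _ _
          _ = |τ₁| + |τ₂| := by rw [abs_neg, abs_neg]
      linarith [abs_le_jb τ₁, abs_le_jb τ₂]
    have key : |τ₃| ≤ Real.sqrt (C * jb a) * Real.sqrt (jb τ₁ + jb τ₂) :=
      le_sqrt_mul_sqrt (abs_nonneg _) (mul_nonneg (by linarith) (jb_nonneg _)) h3 h3a
    have h1 : Real.sqrt (C * jb a) = Real.sqrt C * sa := Real.sqrt_mul (by linarith) _
    have h2 : Real.sqrt (jb τ₁ + jb τ₂) ≤ s₁ + s₂ :=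
      sqrt_add_le _ _ (jb_nonneg _) (jb_nonneg _)
    calc |τ₃| ≤ Real.sqrt (C * jb a) * Real.sqrt (jb τ₁ + jb τ₂) := key
      _ = Real.sqrt C * sa * Real.sqrt (jb τ₁ + jb τ₂) := by rw [h1]
      _ ≤ C * sa * (s₁ + s₂) := mul_le_mul (by nlinarith) h2 (Real.sqrt_nonneg _) (by nlinarith)
  nlinarith [mul_nonneg hs₁n hs₂n, mul_nonneg hs₁n hsan, mul_nonneg hs₂n hsan]
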